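/- Revised Prawitz's Conjecture: For every formula φ of propositional logic, φ is generalized proof-theoretically valid if and only if φ is derivable in intuitionistic propositional logic. -/
import Mathlib


/-!
Common framework for proof-theoretic validity (Prawitz / Piecha–Schroeder-Heister style).

* Propositional formulas over countably many atoms (`ℕ`), with `⊥`, `∧`, `∨`, `→`;
  `¬A` abbreviates `A → ⊥`.
* Higher-level atomic rules: a rule has a finite list of premises, each premise being
  a pair of (a finite list of lower-level rules that may be discharged, an atomic
  conclusion), together with an atomic conclusion.  An atomic axiom `p̄` is
  `HLRule.mk [] p`; an assumption of an atom is identified with its axiom rule.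
* `AtDeriv S p`: the atom `p` is derivable using only rules of `S`
  (discharged rules become available).
* `Deriv S Γ φ`: natural deduction NJ augmented with the atomic rules in `S`,
  from hypotheses `Γ`.  `⊢_IPC` is `Deriv ∅ ∅`.
* `Valid 𝔖 S φ` formalizes "there is a closed `S`-valid argument for `φ`" relative to
  the proof-theoretic system `𝔖` (acceptable extensions of `S` are the supersets of `S`
  belonging to `𝔖`).  Unfolding the inductive definition of `S`-validity of arguments
  (atomic case, closed introduction case, closed non-introduction case, open case)
  clause-by-clause on the conclusion yields exactly the following recursion on formulas:
  a closed valid argument for `A ∧ B` reduces (via the non-introduction case) to one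
  ending in `∧`-introduction, i.e. closed valid arguments for `A` and `B`; similarly for
  `∨`; a closed valid argument for `A → B` reduces to one ending in `→`-introduction,
  whose immediate subargument is an open argument of `B` from the assumption `A`, which
  by the open case is valid iff every acceptable extension `S' ∈ 𝔖` of `S` having a
  closed `S'`-valid argument for `A` has one for `B`; a closed valid argument for an
  atom `p` exists iff `p` is `S`-derivable; and for `⊥` (which has no introduction rule,
  and is governed by the rules `⊥/p` for every atom `p`) iff every atom is `S`-derivable.
-/

/-- Propositional formulas over atoms `ℕ`. -/
inductive PropForm : Type
  | atom : ℕ → PropForm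
  | falsum : PropForm
  | conj : PropForm → PropForm → PropForm
  | disj : PropForm → PropForm → PropForm
  | impl : PropForm → PropForm → PropForm
  deriving DecidableEq

/-- `¬A` abbreviates `A → ⊥`. -/
def PropForm.neg (A : PropForm) : PropForm := .impl A .falsum

/-- Higher-level atomic rules. -/
inductive HLRule : Type
  | mk : List (List HLRule × ℕ) → ℕ → HLRule

/-- `AtDeriv S p`: the atom `p` is derivable using only the atomic rules in `S`;
applying a rule requires deriving each premise with its discharged rules made available. -/
inductive AtDeriv : Set HLRule → ℕ → Prop
  | app (S : Set HLRule) (prems : List (List HLRule × ℕ)) (concl : ℕ)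
      (hmem : HLRule.mk prems concl ∈ S)
      (hprem : ∀ pr ∈ prems, AtDeriv (S ∪ {R | R ∈ pr.1}) pr.2) :
      AtDeriv S concl

/-- Natural deduction NJ for intuitionistic propositional logic, augmented with the
atomic rules in `S`, with hypotheses `Γ`.  `Deriv ∅ Γ φ` is `Γ ⊢_IPC φ`. -/
inductive Deriv : Set HLRule → Set PropForm → PropForm → Prop
  | hyp {S : Set HLRule} {Γ : Set PropForm} {A : PropForm} :
      A ∈ Γ → Deriv S Γ A
  | falsumE {S : Set HLRule} {Γ : Set PropForm} {A : PropForm} :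
      Deriv S Γ .falsum → Deriv S Γ A
  | andI {S : Set HLRule} {Γ : Set PropForm} {A B : PropForm} :
      Deriv S Γ A → Deriv S Γ B → Deriv S Γ (.conj A B)
  | andE1 {S : Set HLRule} {Γ : Set PropForm} {A B : PropForm} :
      Deriv S Γ (.conj A B) → Deriv S Γ A
  | andE2 {S : Set HLRule} {Γ : Set PropForm} {A B : PropForm} :
      Deriv S Γ (.conj A B) → Deriv S Γ B
  | orI1 {S : Set HLRule} {Γ : Set PropForm} {A B : PropForm} :
      Deriv S Γ A → Deriv S Γ (.disj A B)
  | orI2 {S : Set HLRule} {Γ : Set PropForm} {A B : PropForm} :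
      Deriv S Γ B → Deriv S Γ (.disj A B)
  | orE {S : Set HLRule} {Γ : Set PropForm} {A B C : PropForm} :
      Deriv S Γ (.disj A B) → Deriv S (insert A Γ) C → Deriv S (insert B Γ) C →
      Deriv S Γ C
  | implI {S : Set HLRule} {Γ : Set PropForm} {A B : PropForm} :
      Deriv S (insert A Γ) B → Deriv S Γ (.impl A B)
  | implE {S : Set HLRule} {Γ : Set PropForm} {A B : PropForm} :
      Deriv S Γ (.impl A B) → Deriv S Γ A → Deriv S Γ B
  | rule {S : Set HLRule} {Γ : Set PropForm}
      (prems : List (List HLRule × ℕ)) (concl : ℕ) :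
      HLRule.mk prems concl ∈ S →
      (∀ pr ∈ prems, Deriv (S ∪ {R | R ∈ pr.1}) Γ (.atom pr.2)) →
      Deriv S Γ (.atom concl)

/-- `⊢_IPC φ` : derivability of `φ` in intuitionistic propositional natural deduction. -/
def IPC (φ : PropForm) : Prop := Deriv ∅ ∅ φ

/-- Auxiliary form of validity, by recursion on the formula. -/
def ValidAux (𝔖 : Set (Set HLRule)) : PropForm → Set HLRule → Prop
  | .atom p, S => AtDeriv S p
  | .falsum, S => ∀ a : ℕ, AtDeriv S a
  | .conj A B, S => ValidAux 𝔖 A S ∧ ValidAux 𝔖 B S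
  | .disj A B, S => ValidAux 𝔖 A S ∨ ValidAux 𝔖 B S
  | .impl A B, S => ∀ S' ∈ 𝔖, S ⊆ S' → ValidAux 𝔖 A S' → ValidAux 𝔖 B S'

/-- `Valid 𝔖 S φ`: relative to the proof-theoretic system `𝔖` (in which the acceptable
extensions of `S` are exactly the supersets of `S` belonging to `𝔖`), there is a closed
`S`-valid argument for `φ`. -/
def Valid (𝔖 : Set (Set HLRule)) (S : Set HLRule) (φ : PropForm) : Prop :=
  ValidAux 𝔖 φ S

/-- `𝔖 ⊨ φ`: for every `S ∈ 𝔖` there is a closed `S`-valid argument for `φ`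
(acceptable extensions taken in `𝔖`). -/
def Models (𝔖 : Set (Set HLRule)) (φ : PropForm) : Prop :=
  ∀ S ∈ 𝔖, Valid 𝔖 S φ

/-- The complete proof-theoretic system: all sets of atomic rules of all levels. -/
def completeSystem : Set (Set HLRule) := Set.univ

/-- `S`-validity of the open one-premise/one-assumption argument from `A` to `B`
(relative to `𝔖`): by the open case, for every acceptable extension `S' ∈ 𝔖` of `S`,
substituting any closed `S'`-valid argument for the assumption `A` yields an
`S'`-valid closed argument, which (the final step not being an introduction rule)
amounts to the existence of a closed `S'`-valid argument for `B`. -/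
def OpenArgValid1 (𝔖 : Set (Set HLRule)) (S : Set HLRule) (A B : PropForm) : Prop :=
  ∀ S' ∈ 𝔖, S ⊆ S' → Valid 𝔖 S' A → Valid 𝔖 S' B

section Sound

lemma atDeriv_mono : ∀ {S p}, AtDeriv S p → ∀ {T}, S ⊆ T → AtDeriv T p := by
  intro S p h
  induction h with
  | app S prems concl hmem hprem ih =>
    intro T hST
    exact AtDeriv.app T prems concl (hST hmem)
      (fun pr hpr => ih pr hpr (Set.union_subset_union_left _ hST))

lemma validAux_mono (𝔖 : Set (Set HLRule)) :
    ∀ (A : PropForm) {S T : Set HLRule}, S ⊆ T → ValidAux 𝔖 A S → ValidAux 𝔖 A T := by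
  intro A
  induction A with
  | atom p => intro S T h hv; exact atDeriv_mono hv h
  | falsum => intro S T h hv a; exact atDeriv_mono (hv a) h
  | conj A B ihA ihB => intro S T h hv; exact ⟨ihA h hv.1, ihB h hv.2⟩
  | disj A B ihA ihB =>
    intro S T h hv
    exact hv.elim (fun x => Or.inl (ihA h x)) (fun x => Or.inr (ihB h x))
  | impl A B ihA ihB =>
    intro S T h hv S' hS' hsub hA
    exact hv S' hS' (h.trans hsub) hA

lemma validAux_of_all_atoms (𝔖 : Set (Set HLRule)) :
    ∀ (A : PropForm) {S : Set HLRule}, (∀ a, AtDeriv S a) → ValidAux 𝔖 A S := by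
  intro A
  induction A with
  | atom p => intro S h; exact h p
  | falsum => intro S h; exact h
  | conj A B ihA ihB => intro S h; exact ⟨ihA h, ihB h⟩
  | disj A B ihA ihB => intro S h; exact Or.inl (ihA h)
  | impl A B ihA ihB =>
    intro S h S' hS' hsub _
    exact ihB (fun a => atDeriv_mono (h a) hsub)

lemma sound {S : Set HLRule} {Γ : Set PropForm} {A : PropForm} (h : Deriv S Γ A) :
    S = ∅ → ∀ (𝔖 : Set (Set HLRule)), ∀ S' ∈ 𝔖,
      (∀ γ ∈ Γ, ValidAux 𝔖 γ S') → ValidAux 𝔖 A S' := by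
  induction h with
  | hyp hmem => intro _ 𝔖 S' _ hΓ; exact hΓ _ hmem
  | falsumE h ih =>
    intro hS 𝔖 S' hS' hΓ
    exact validAux_of_all_atoms 𝔖 _ (ih hS 𝔖 S' hS' hΓ)
  | andI h1 h2 ih1 ih2 =>
    intro hS 𝔖 S' hS' hΓ
    exact ⟨ih1 hS 𝔖 S' hS' hΓ, ih2 hS 𝔖 S' hS' hΓ⟩
  | andE1 h ih => intro hS 𝔖 S' hS' hΓ; exact (ih hS 𝔖 S' hS' hΓ).1
  | andE2 h ih => intro hS 𝔖 S' hS' hΓ; exact (ih hS 𝔖 S' hS' hΓ).2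
  | orI1 h ih => intro hS 𝔖 S' hS' hΓ; exact Or.inl (ih hS 𝔖 S' hS' hΓ)
  | orI2 h ih => intro hS 𝔖 S' hS' hΓ; exact Or.inr (ih hS 𝔖 S' hS' hΓ)
  | orE h h1 h2 ih ih1 ih2 =>
    intro hS 𝔖 S' hS' hΓ
    rcases ih hS 𝔖 S' hS' hΓ with hA | hB
    · refine ih1 hS 𝔖 S' hS' ?_
      intro γ hγ
      rcases Set.mem_insert_iff.1 hγ with rfl | hγ
      · exact hA
      · exact hΓ γ hγ
    · refine ih2 hS 𝔖 S' hS' ?_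
      intro γ hγ
      rcases Set.mem_insert_iff.1 hγ with rfl | hγ
      · exact hB
      · exact hΓ γ hγ
  | implI h ih =>
    intro hS 𝔖 S' hS' hΓ S'' hS'' hsub hA
    refine ih hS 𝔖 S'' hS'' ?_
    intro γ hγ
    rcases Set.mem_insert_iff.1 hγ with rfl | hγ
    · exact hA
    · exact validAux_mono 𝔖 γ hsub (hΓ γ hγ)
  | implE h1 h2 ih1 ih2 =>
    intro hS 𝔖 S' hS' hΓ
    exact ih1 hS 𝔖 S' hS' hΓ S' hS' (subset_refl _) (ih2 hS 𝔖 S' hS' hΓ)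
  | rule prems concl hmem hprem ih =>
    intro hS
    subst hS
    exact absurd hmem (Set.notMem_empty _)

end Sound

section Complete

/-- Weakening for `Deriv`. -/
lemma deriv_weak : ∀ {S : Set HLRule} {Γ : Set PropForm} {A : PropForm},
    Deriv S Γ A → ∀ {Γ' : Set PropForm}, Γ ⊆ Γ' → Deriv S Γ' A := by
  intro S Γ A h
  induction h with
  | hyp hmem => intro Γ' hsub; exact Deriv.hyp (hsub hmem)
  | falsumE h ih => intro Γ' hsub; exact Deriv.falsumE (ih hsub)
  | andI h1 h2 ih1 ih2 => intro Γ' hsub; exact Deriv.andI (ih1 hsub) (ih2 hsub)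
  | andE1 h ih => intro Γ' hsub; exact Deriv.andE1 (ih hsub)
  | andE2 h ih => intro Γ' hsub; exact Deriv.andE2 (ih hsub)
  | orI1 h ih => intro Γ' hsub; exact Deriv.orI1 (ih hsub)
  | orI2 h ih => intro Γ' hsub; exact Deriv.orI2 (ih hsub)
  | orE h h1 h2 ih ih1 ih2 =>
    intro Γ' hsub
    exact Deriv.orE (ih hsub) (ih1 (Set.insert_subset_insert hsub))
      (ih2 (Set.insert_subset_insert hsub))
  | implI h ih => intro Γ' hsub; exact Deriv.implI (ih (Set.insert_subset_insert hsub))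
  | implE h1 h2 ih1 ih2 => intro Γ' hsub; exact Deriv.implE (ih1 hsub) (ih2 hsub)
  | rule prems concl hmem hprem ih =>
    intro Γ' hsub
    exact Deriv.rule prems concl hmem (fun pr hpr => ih pr hpr hsub)

/-- Base injective coding of formulas. -/
def eenc : PropForm → ℕ
  | .atom n => Nat.pair 0 n
  | .falsum => Nat.pair 1 0
  | .conj a b => Nat.pair 2 (Nat.pair (eenc a) (eenc b))
  | .disj a b => Nat.pair 3 (Nat.pair (eenc a) (eenc b))
  | .impl a b => Nat.pair 4 (Nat.pair (eenc a) (eenc b))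

lemma eenc_inj : ∀ a b : PropForm, eenc a = eenc b → a = b := by
  intro a
  induction a with
  | atom n => intro b h; cases b <;> simp_all [eenc, Nat.pair_eq_pair]
  | falsum => intro b h; cases b <;> simp_all [eenc, Nat.pair_eq_pair]
  | conj A B ihA ihB =>
    intro b h
    cases b <;> simp only [eenc, Nat.pair_eq_pair] at h
    · exact absurd h.1 (by norm_num)
    · exact absurd h.1 (by norm_num)
    case' conj X Y => rw [ihA _ h.2.1, ihB _ h.2.2]
    all_goals first
      | rfl
      | exact absurd h.1 (by norm_num)
  | disj A B ihA ihB =>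
    intro b h
    cases b <;> simp only [eenc, Nat.pair_eq_pair] at h
    · exact absurd h.1 (by norm_num)
    · exact absurd h.1 (by norm_num)
    case' disj X Y => rw [ihA _ h.2.1, ihB _ h.2.2]
    all_goals first
      | rfl
      | exact absurd h.1 (by norm_num)
  | impl A B ihA ihB =>
    intro b h
    cases b <;> simp only [eenc, Nat.pair_eq_pair] at h
    · exact absurd h.1 (by norm_num)
    · exact absurd h.1 (by norm_num)
    case' impl X Y => rw [ihA _ h.2.1, ihB _ h.2.2]
    all_goals first
      | rfl
      | exact absurd h.1 (by norm_num)

/-- Atoms occurring in a formula. -/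
def atomsL : PropForm → List ℕ
  | .atom n => [n]
  | .falsum => []
  | .conj a b => atomsL a ++ atomsL b
  | .disj a b => atomsL a ++ atomsL b
  | .impl a b => atomsL a ++ atomsL b

/-- A bound strictly above all atoms of `φ`. -/
def NB (φ : PropForm) : ℕ := (atomsL φ).foldr max 0 + 1

lemma lt_NB {φ : PropForm} {p : ℕ} (h : p ∈ atomsL φ) : p < NB φ := by
  have : ∀ (l : List ℕ) (q : ℕ), q ∈ l → q ≤ l.foldr max 0 := by
    intro l
    induction l with
    | nil => simp
    | cons a t ih =>
      intro q hq
      rcases List.mem_cons.1 hq with rfl | hq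
      · exact le_max_left _ _
      · exact le_trans (ih q hq) (le_max_right _ _)
  have := this _ _ h
  unfold NB
  omega

/-- Coding of formulas tailored to `φ`: atoms of `φ` code themselves. -/
def enc (φ : PropForm) (ψ : PropForm) : ℕ :=
  match ψ with
  | .atom p => if p ∈ atomsL φ then p else NB φ + 1 + 2 * eenc (.atom p)
  | _ => NB φ + 1 + 2 * eenc ψ

lemma enc_cases (φ ψ : PropForm) :
    (∃ p, ψ = .atom p ∧ p ∈ atomsL φ ∧ enc φ ψ = p) ∨
      enc φ ψ = NB φ + 1 + 2 * eenc ψ := by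
  cases ψ with
  | atom p =>
    by_cases h : p ∈ atomsL φ
    · exact Or.inl ⟨p, rfl, h, by simp [enc, h]⟩
    · exact Or.inr (by simp [enc, h])
  | falsum => exact Or.inr rfl
  | conj a b => exact Or.inr rfl
  | disj a b => exact Or.inr rfl
  | impl a b => exact Or.inr rfl

lemma enc_inj (φ : PropForm) : Function.Injective (enc φ) := by
  intro a b h
  rcases enc_cases φ a with ⟨p, rfl, hpL, hp⟩ | ha <;>
    rcases enc_cases φ b with ⟨q, rfl, hqL, hq⟩ | hb
  · rw [hp, hq] at h; rw [h]
  · exfalso; rw [hp, hb] at h; have := lt_NB hpL; omega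
  · exfalso; rw [ha, hq] at h; have := lt_NB hqL; omega
  · rw [ha, hb] at h
    exact eenc_inj _ _ (by omega)

lemma enc_ne_NB (φ ψ : PropForm) : enc φ ψ ≠ NB φ := by
  rcases enc_cases φ ψ with ⟨p, rfl, hpL, hp⟩ | h
  · rw [hp]; exact Nat.ne_of_lt (lt_NB hpL)
  · omega

open Classical in
/-- Decoding: the formula coded by an atom, `⊥` if none. -/
noncomputable def dec (φ : PropForm) (n : ℕ) : PropForm :=
  if h : ∃ ψ, enc φ ψ = n then h.choose else .falsum

lemma dec_enc (φ ψ : PropForm) : dec φ (enc φ ψ) = ψ := by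
  have h : ∃ ψ', enc φ ψ' = enc φ ψ := ⟨ψ, rfl⟩
  rw [dec, dif_pos h]
  exact enc_inj φ h.choose_spec

lemma dec_NB (φ : PropForm) : dec φ (NB φ) = .falsum := by
  rw [dec, dif_neg]
  rintro ⟨ψ, hψ⟩
  exact enc_ne_NB φ ψ hψ

lemma dec_atom {φ : PropForm} {p : ℕ} (h : p ∈ atomsL φ) : dec φ p = .atom p := by
  have he : enc φ (.atom p) = p := by simp [enc, h]
  have := dec_enc φ (.atom p)
  rwa [he] at this

/-- Interpretation of a formula: replace each atom by the formula it codes. -/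
noncomputable def inter (φ : PropForm) : PropForm → PropForm
  | .atom p => dec φ p
  | .falsum => .falsum
  | .conj a b => .conj (inter φ a) (inter φ b)
  | .disj a b => .disj (inter φ a) (inter φ b)
  | .impl a b => .impl (inter φ a) (inter φ b)

lemma inter_eq_self (φ : PropForm) :
    ∀ ψ, (∀ p ∈ atomsL ψ, p ∈ atomsL φ) → inter φ ψ = ψ := by
  intro ψ
  induction ψ with
  | atom p => intro h; exact dec_atom (h p (by simp [atomsL]))
  | falsum => intro _; rfl
  | conj a b iha ihb =>
    intro h
    have ha := iha (fun p hp => h p (by simp [atomsL, hp]))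
    have hb := ihb (fun p hp => h p (by simp [atomsL, hp]))
    simp [inter, ha, hb]
  | disj a b iha ihb =>
    intro h
    have ha := iha (fun p hp => h p (by simp [atomsL, hp]))
    have hb := ihb (fun p hp => h p (by simp [atomsL, hp]))
    simp [inter, ha, hb]
  | impl a b iha ihb =>
    intro h
    have ha := iha (fun p hp => h p (by simp [atomsL, hp]))
    have hb := ihb (fun p hp => h p (by simp [atomsL, hp]))
    simp [inter, ha, hb]

/-- Subformula list. -/
def subsL : PropForm → List PropForm
  | .atom n => [.atom n]
  | .falsum => [.falsum]
  | .conj a b => .conj a b :: (subsL a ++ subsL b)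
  | .disj a b => .disj a b :: (subsL a ++ subsL b)
  | .impl a b => .impl a b :: (subsL a ++ subsL b)

lemma mem_subsL_self : ∀ A : PropForm, A ∈ subsL A := by
  intro A; cases A <;> simp [subsL]

lemma subsL_trans : ∀ (φ A : PropForm), A ∈ subsL φ → subsL A ⊆ subsL φ := by
  intro φ
  induction φ with
  | atom n => intro A hA; simp [subsL] at hA; subst hA; exact fun x h => h
  | falsum => intro A hA; simp [subsL] at hA; subst hA; exact fun x h => h
  | conj a b iha ihb =>
    intro A hA
    rcases List.mem_cons.1 hA with rfl | hA
    · exact fun x h => h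
    · rcases List.mem_append.1 hA with h | h
      · exact fun x hx => List.mem_cons_of_mem _ (List.mem_append_left _ (iha A h hx))
      · exact fun x hx => List.mem_cons_of_mem _ (List.mem_append_right _ (ihb A h hx))
  | disj a b iha ihb =>
    intro A hA
    rcases List.mem_cons.1 hA with rfl | hA
    · exact fun x h => h
    · rcases List.mem_append.1 hA with h | h
      · exact fun x hx => List.mem_cons_of_mem _ (List.mem_append_left _ (iha A h hx))
      · exact fun x hx => List.mem_cons_of_mem _ (List.mem_append_right _ (ihb A h hx))
  | impl a b iha ihb =>
    intro A hA
    rcases List.mem_cons.1 hA with rfl | hA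
    · exact fun x h => h
    · rcases List.mem_append.1 hA with h | h
      · exact fun x hx => List.mem_cons_of_mem _ (List.mem_append_left _ (iha A h hx))
      · exact fun x hx => List.mem_cons_of_mem _ (List.mem_append_right _ (ihb A h hx))

lemma subsL_conj {φ A B : PropForm} (h : .conj A B ∈ subsL φ) :
    A ∈ subsL φ ∧ B ∈ subsL φ :=
  ⟨subsL_trans φ _ h (by simp [subsL, mem_subsL_self]),
   subsL_trans φ _ h (by simp [subsL, mem_subsL_self])⟩

lemma subsL_disj {φ A B : PropForm} (h : .disj A B ∈ subsL φ) :
    A ∈ subsL φ ∧ B ∈ subsL φ :=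
  ⟨subsL_trans φ _ h (by simp [subsL, mem_subsL_self]),
   subsL_trans φ _ h (by simp [subsL, mem_subsL_self])⟩

lemma subsL_impl {φ A B : PropForm} (h : .impl A B ∈ subsL φ) :
    A ∈ subsL φ ∧ B ∈ subsL φ :=
  ⟨subsL_trans φ _ h (by simp [subsL, mem_subsL_self]),
   subsL_trans φ _ h (by simp [subsL, mem_subsL_self])⟩

/-- The (interpreted) disjunctive subformula pairs of `φ`. -/
noncomputable def Dl (φ : PropForm) : List (PropForm × PropForm) :=
  (subsL φ).filterMap
    (fun ψ => match ψ with
      | .disj X Y => some (inter φ X, inter φ Y)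
      | _ => none)

lemma mem_Dl {φ X Y : PropForm} (h : .disj X Y ∈ subsL φ) :
    (inter φ X, inter φ Y) ∈ Dl φ :=
  List.mem_filterMap.2 ⟨.disj X Y, h, rfl⟩

/-- A theory that decides all relevant disjunctions it derives. -/
def PrimeD (φ : PropForm) (Δ : Set PropForm) : Prop :=
  ∀ q ∈ Dl φ, Deriv ∅ Δ (.disj q.1 q.2) → Deriv ∅ Δ q.1 ∨ Deriv ∅ Δ q.2

/-- The atomic base canonically associated with the theory `Δ`. -/
noncomputable def SW (φ : PropForm) (Δ : Set PropForm) : Set HLRule :=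
  {R | ∃ n, R = HLRule.mk [] n ∧ Deriv ∅ Δ (dec φ n)}

/-- The canonical proof-theoretic system for `φ`. -/
noncomputable def Sys (φ : PropForm) : Set (Set HLRule) :=
  {S | ∃ Δ, PrimeD φ Δ ∧ S = SW φ Δ}

lemma atDeriv_SW {φ : PropForm} {Δ : Set PropForm} {n : ℕ} :
    AtDeriv (SW φ Δ) n ↔ Deriv ∅ Δ (dec φ n) := by
  constructor
  · intro h
    cases h with
    | app S prems concl hmem hprem =>
      obtain ⟨m, heq, hd⟩ := hmem
      obtain ⟨h1, h2⟩ := HLRule.mk.inj heq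
      subst h2
      exact hd
  · intro h
    exact AtDeriv.app _ [] n ⟨n, rfl, h⟩ (by simp)

lemma SW_mono {φ : PropForm} {Δ Δ' : Set PropForm} (h : Δ ⊆ Δ') :
    SW φ Δ ⊆ SW φ Δ' := by
  rintro R ⟨n, rfl, hd⟩
  exact ⟨n, rfl, deriv_weak hd h⟩

lemma SW_le {φ : PropForm} {Δ Δ' : Set PropForm} (h : SW φ Δ ⊆ SW φ Δ')
    {ψ : PropForm} (hd : Deriv ∅ Δ ψ) : Deriv ∅ Δ' ψ := by
  have hmem : HLRule.mk [] (enc φ ψ) ∈ SW φ Δ := ⟨enc φ ψ, rfl, by rwa [dec_enc]⟩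
  obtain ⟨m, heq, hd'⟩ := h hmem
  obtain ⟨-, h2⟩ := HLRule.mk.inj heq
  subst h2
  rwa [dec_enc] at hd'

/-- A pair of formulas is resolved by `Δ` if one of them is derivable. -/
def Resolved (Δ : Set PropForm) (q : PropForm × PropForm) : Prop :=
  Deriv ∅ Δ q.1 ∨ Deriv ∅ Δ q.2

open Classical in
/-- The resolved pairs of `φ` at `Δ`. -/
noncomputable def RF (φ : PropForm) (Δ : Set PropForm) : Finset (PropForm × PropForm) :=
  (Dl φ).toFinset.filter (Resolved Δ)

open Classical in
lemma lind_aux (φ : PropForm) : ∀ (k : ℕ) (Δ : Set PropForm) (G : PropForm),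
    (Dl φ).toFinset.card - (RF φ Δ).card ≤ k → ¬Deriv ∅ Δ G →
      ∃ Δ', Δ ⊆ Δ' ∧ PrimeD φ Δ' ∧ ¬Deriv ∅ Δ' G := by
  intro k
  induction k with
  | zero =>
    intro Δ G hk hG
    by_cases hex : ∃ q ∈ Dl φ, Deriv ∅ Δ (.disj q.1 q.2) ∧ ¬ Resolved Δ q
    · exfalso
      obtain ⟨q, hq, hd, hnr⟩ := hex
      have hss : RF φ Δ ⊂ (Dl φ).toFinset := by
        refine ⟨Finset.filter_subset _ _, fun hsub => hnr ?_⟩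
        have := hsub (List.mem_toFinset.2 hq)
        exact (Finset.mem_filter.1 this).2
      have := Finset.card_lt_card hss
      omega
    · refine ⟨Δ, subset_rfl, ?_, hG⟩
      intro q hq hd
      by_contra hno
      exact hex ⟨q, hq, hd, fun hr => hno (hr.elim Or.inl Or.inr)⟩
  | succ k ih =>
    intro Δ G hk hG
    by_cases hex : ∃ q ∈ Dl φ, Deriv ∅ Δ (.disj q.1 q.2) ∧ ¬ Resolved Δ q
    · obtain ⟨q, hqD, hd, hnr⟩ := hex
      have hside : ¬Deriv ∅ (insert q.1 Δ) G ∨ ¬Deriv ∅ (insert q.2 Δ) G := by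
        by_contra hc
        push_neg at hc
        exact hG (Deriv.orE hd hc.1 hc.2)
      obtain ⟨X, hX1, hX2⟩ : ∃ X, ¬Deriv ∅ (insert X Δ) G ∧ Resolved (insert X Δ) q := by
        rcases hside with h | h
        · exact ⟨q.1, h, Or.inl (Deriv.hyp (Set.mem_insert _ _))⟩
        · exact ⟨q.2, h, Or.inr (Deriv.hyp (Set.mem_insert _ _))⟩
      have hsub : Δ ⊆ insert X Δ := Set.subset_insert _ _
      have hmono : RF φ Δ ⊂ RF φ (insert X Δ) := by
        constructor
        · intro r hr
          obtain ⟨hr1, hr2⟩ := Finset.mem_filter.1 hr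
          exact Finset.mem_filter.2 ⟨hr1, hr2.elim (fun x => Or.inl (deriv_weak x hsub))
            (fun x => Or.inr (deriv_weak x hsub))⟩
        · intro hcon
          exact hnr (Finset.mem_filter.1
            (hcon (Finset.mem_filter.2 ⟨List.mem_toFinset.2 hqD, hX2⟩))).2
      have hcard : (RF φ Δ).card < (RF φ (insert X Δ)).card := Finset.card_lt_card hmono
      have hle : (RF φ (insert X Δ)).card ≤ (Dl φ).toFinset.card :=
        Finset.card_le_card (Finset.filter_subset _ _)
      obtain ⟨Δ', h1, h2, h3⟩ := ih (insert X Δ) G (by omega) hX1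
      exact ⟨Δ', hsub.trans h1, h2, h3⟩
    · refine ⟨Δ, subset_rfl, ?_, hG⟩
      intro q hq hd
      by_contra hno
      exact hex ⟨q, hq, hd, fun hr => hno (hr.elim Or.inl Or.inr)⟩

lemma lind (φ : PropForm) {Δ : Set PropForm} {G : PropForm} (hG : ¬Deriv ∅ Δ G) :
    ∃ Δ', Δ ⊆ Δ' ∧ PrimeD φ Δ' ∧ ¬Deriv ∅ Δ' G :=
  lind_aux φ ((Dl φ).toFinset.card) Δ G (Nat.sub_le _ _) hG

/-- Main correspondence: for subformulas of `φ`, validity at the canonical base of a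
relevantly prime theory `Δ` coincides with derivability of the interpretation from `Δ`. -/
lemma PQ (φ : PropForm) : ∀ A, A ∈ subsL φ → ∀ Δ, PrimeD φ Δ →
    (ValidAux (Sys φ) A (SW φ Δ) → Deriv ∅ Δ (inter φ A)) ∧
    (Deriv ∅ Δ (inter φ A) → ValidAux (Sys φ) A (SW φ Δ)) := by
  intro A
  induction A with
  | atom p =>
    intro _ Δ _
    exact ⟨fun h => atDeriv_SW.1 h, fun h => atDeriv_SW.2 h⟩
  | falsum =>
    intro _ Δ _
    constructor
    · intro h
      have := atDeriv_SW.1 (h (NB φ))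
      rwa [dec_NB] at this
    · intro h a
      exact atDeriv_SW.2 (Deriv.falsumE h)
  | conj A B ihA ihB =>
    intro hmem Δ hp
    obtain ⟨hA, hB⟩ := subsL_conj hmem
    constructor
    · intro h
      exact Deriv.andI ((ihA hA Δ hp).1 h.1) ((ihB hB Δ hp).1 h.2)
    · intro h
      exact ⟨(ihA hA Δ hp).2 (Deriv.andE1 h), (ihB hB Δ hp).2 (Deriv.andE2 h)⟩
  | disj A B ihA ihB =>
    intro hmem Δ hp
    obtain ⟨hA, hB⟩ := subsL_disj hmem
    constructor
    · intro h
      rcases h with h | h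
      · exact Deriv.orI1 ((ihA hA Δ hp).1 h)
      · exact Deriv.orI2 ((ihB hB Δ hp).1 h)
    · intro h
      rcases hp _ (mem_Dl hmem) h with h' | h'
      · exact Or.inl ((ihA hA Δ hp).2 h')
      · exact Or.inr ((ihB hB Δ hp).2 h')
  | impl A B ihA ihB =>
    intro hmem Δ hp
    obtain ⟨hA, hB⟩ := subsL_impl hmem
    constructor
    · intro h
      refine Deriv.implI ?_
      by_cases hc : Deriv ∅ (insert (inter φ A) Δ) (inter φ B)
      · exact hc
      · exfalso
        obtain ⟨Δ', hsub, hp', hG⟩ := lind φ hc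
        have hΔsub : Δ ⊆ Δ' := (Set.subset_insert _ _).trans hsub
        have hVA : ValidAux (Sys φ) A (SW φ Δ') :=
          (ihA hA Δ' hp').2 (Deriv.hyp (hsub (Set.mem_insert _ _)))
        have hVB := h (SW φ Δ') ⟨Δ', hp', rfl⟩ (SW_mono hΔsub) hVA
        exact hG ((ihB hB Δ' hp').1 hVB)
    · intro h S' hS' hsub hVA
      obtain ⟨Δ', hp', rfl⟩ := hS'
      have hA' := (ihA hA Δ' hp').1 hVA
      have himp : Deriv ∅ Δ' (.impl (inter φ A) (inter φ B)) := SW_le hsub h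
      exact (ihB hB Δ' hp').2 (Deriv.implE himp hA')

end Complete

/-- **Revised Prawitz's Conjecture.**  A propositional formula `φ` is generalized
proof-theoretically valid — i.e. for every proof-theoretic system `𝔖` and every
`S ∈ 𝔖` there is a closed `S`-valid argument for `φ` (acceptable extensions taken
in `𝔖`) — if and only if `φ` is derivable in intuitionistic propositional logic. -/
theorem revised_prawitz_conjecture (φ : PropForm) :
    (∀ 𝔖 : Set (Set HLRule), ∀ S ∈ 𝔖, Valid 𝔖 S φ) ↔ IPC φ := by
  constructor
  · intro H
    by_contra hn
    obtain ⟨Δ', hsub, hp, hG⟩ := lind φ (Δ := ∅) (G := φ) hn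
    have hv : ValidAux (Sys φ) φ (SW φ Δ') := H (Sys φ) (SW φ Δ') ⟨Δ', hp, rfl⟩
    have := (PQ φ φ (mem_subsL_self φ) Δ' hp).1 hv
    rw [inter_eq_self φ φ (fun p hp => hp)] at this
    exact hG this
  · intro h 𝔖 S hS
    exact sound h rfl 𝔖 S hS (fun γ hγ => absurd hγ (Set.notMem_empty _))
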